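/- Let ħ > 0 and let X and Y be real symmetric n×n matrices with X positive definite, and let M_F = (1/Tr X) · ((X² + Y², Y),(Y, I)). Then the Fermi ellipsoid W_F = {z ∈ ℝ²ⁿ : ⟨M_F z, z⟩ ≤ ħ} contains a quantum blob: there exists S ∈ Sp(2n,ℝ) such that the image under S of the closed ball of radius √ħ centered at the origin is contained in W_F. -/

import Mathlib

open Matrix

noncomputable section

/-- The standard symplectic matrix `J = ((0, I), (-I, 0))`. -/
def stdJ (n : ℕ) : Matrix (Fin n ⊕ Fin n) (Fin n ⊕ Fin n) ℝ :=
  Matrix.fromBlocks 0 1 (-1) 0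

/-- A real `2n × 2n` matrix is symplectic if `Sᵀ J S = J`. -/
def IsSymplectic {n : ℕ} (S : Matrix (Fin n ⊕ Fin n) (Fin n ⊕ Fin n) ℝ) : Prop :=
  Sᵀ * stdJ n * S = stdJ n

lemma isSymplectic_blocks {n : ℕ} (A C D : Matrix (Fin n) (Fin n) ℝ)
    (h1 : Aᵀ * D = 1) (h2 : Dᵀ * A = 1) (h3 : Aᵀ * C = Cᵀ * A) :
    IsSymplectic (fromBlocks A 0 C D) := by
  unfold IsSymplectic stdJ
  rw [fromBlocks_transpose, fromBlocks_multiply, fromBlocks_multiply]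
  simp [h1, h2, h3]

lemma psd_entry_sq_le {n : ℕ} {X : Matrix (Fin n) (Fin n) ℝ} (hX : X.PosDef)
    (i j : Fin n) : X i j ^ 2 ≤ X i i * X j j := by
  have hsymm : X j i = X i j := by
    have h := congrFun (congrFun hX.isHermitian j) i
    simp [Matrix.conjTranspose_apply] at h
    exact h.symm
  have hjj : 0 < X j j := by
    have h := hX.dotProduct_mulVec_pos (x := Pi.single j 1) (by
      intro h; have := congrFun h j; simp at this)
    simpa [dotProduct_single, single_dotProduct, Matrix.mulVec_single] using h
  have h := hX.posSemidef.dotProduct_mulVec_nonneg (Pi.single i (X j j) + Pi.single j (-(X i j)))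
  simp [Matrix.mulVec_add, Matrix.mulVec_single, add_dotProduct,
    single_dotProduct, hsymm] at h
  nlinarith [h, hjj]

lemma mulVec_sq_le {n : ℕ} {X : Matrix (Fin n) (Fin n) ℝ} (hX : X.PosDef)
    (v : Fin n → ℝ) : (X *ᵥ v) ⬝ᵥ (X *ᵥ v) ≤ X.trace ^ 2 * (v ⬝ᵥ v) := by
  have hvnn : (0:ℝ) ≤ ∑ j, (v j)^2 := Finset.sum_nonneg fun j _ => sq_nonneg _
  have step2 : (∑ i, ∑ j, (X i j)^2) ≤ X.trace ^ 2 := by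
    have h : X.trace ^ 2 = ∑ i, ∑ j, X i i * X j j := by
      rw [Matrix.trace, sq, Finset.sum_mul_sum]
      rfl
    rw [h]
    exact Finset.sum_le_sum fun i _ => Finset.sum_le_sum fun j _ => psd_entry_sq_le hX i j
  calc (X *ᵥ v) ⬝ᵥ (X *ᵥ v) = ∑ i, (∑ j, X i j * v j)^2 := by
        simp [dotProduct, Matrix.mulVec, pow_two]
    _ ≤ ∑ i, (∑ j, (X i j)^2) * (∑ j, (v j)^2) :=
        Finset.sum_le_sum fun i _ => Finset.sum_mul_sq_le_sq_mul_sq _ _ _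
    _ = (∑ i, ∑ j, (X i j)^2) * (∑ j, (v j)^2) := (Finset.sum_mul _ _ _).symm
    _ ≤ X.trace^2 * (∑ j, (v j)^2) := mul_le_mul_of_nonneg_right step2 hvnn
    _ = X.trace^2 * (v ⬝ᵥ v) := by simp [dotProduct, pow_two]

lemma quad_transport {m : Type*} [Fintype m] [DecidableEq m]
    (M S : Matrix m m ℝ) (z : m → ℝ) :
    M *ᵥ (S *ᵥ z) ⬝ᵥ (S *ᵥ z) = ((Sᵀ * M * S) *ᵥ z) ⬝ᵥ z := by
  conv_rhs => rw [← Matrix.mulVec_mulVec, ← Matrix.mulVec_mulVec, Matrix.mulVec_transpose,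
    ← dotProduct_mulVec]

lemma sq_mulVec_dot {n : ℕ} (X : Matrix (Fin n) (Fin n) ℝ) (hXT : Xᵀ = X) (w : Fin n → ℝ) :
    ((X * X) *ᵥ w) ⬝ᵥ w = (X *ᵥ w) ⬝ᵥ (X *ᵥ w) := by
  rw [← Matrix.mulVec_mulVec, dotProduct_comm, dotProduct_mulVec,
    ← Matrix.mulVec_transpose, hXT]

/-- The Fermi ellipsoid `W_F : ⟨M_F z, z⟩ ≤ ħ`, with
`M_F = (1/Tr X)((X² + Y², Y),(Y, I))`, contains a quantum blob: the image of the
closed ball of radius `√ħ` centered at the origin under some symplectic matrix. -/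
theorem fermi_ellipsoid_contains_quantum_blob {n : ℕ} (hn : 1 ≤ n) (hb : ℝ) (hhb : 0 < hb)
    (X Y : Matrix (Fin n) (Fin n) ℝ) (hXsymm : X.IsSymm) (hYsymm : Y.IsSymm)
    (hX : X.PosDef)
    (MF : Matrix (Fin n ⊕ Fin n) (Fin n ⊕ Fin n) ℝ)
    (hMF : MF = (X.trace)⁻¹ • Matrix.fromBlocks (X * X + Y * Y) Y Y 1) :
    ∃ S : Matrix (Fin n ⊕ Fin n) (Fin n ⊕ Fin n) ℝ, IsSymplectic S ∧
      (fun z => S.mulVec z) ''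
          {z : (Fin n ⊕ Fin n) → ℝ | Real.sqrt (z ⬝ᵥ z) ≤ Real.sqrt hb} ⊆
        {z : (Fin n ⊕ Fin n) → ℝ | MF.mulVec z ⬝ᵥ z ≤ hb} := by
  have hXT : Xᵀ = X := hXsymm
  have hYT : Yᵀ = Y := hYsymm
  set t := X.trace with ht_def
  have ht : 0 < t := by
    rw [ht_def, Matrix.trace]
    have : Nonempty (Fin n) := ⟨⟨0, hn⟩⟩
    apply Finset.sum_pos
    · intro i _
      have h := hX.dotProduct_mulVec_pos (x := Pi.single i 1) (by
        intro h; have := congrFun h i; simp at this)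
      simpa [dotProduct_single, single_dotProduct, Matrix.mulVec_single] using h
    · exact Finset.univ_nonempty
  set c := Real.sqrt t with hc_def
  have hc : 0 < c := Real.sqrt_pos.mpr ht
  have hc2 : c * c = t := Real.mul_self_sqrt ht.le
  have hXinv : X * X⁻¹ = 1 := Matrix.mul_nonsing_inv X (isUnit_iff_isUnit_det X |>.mp hX.isUnit)
  have hXinv' : X⁻¹ * X = 1 := Matrix.nonsing_inv_mul X (isUnit_iff_isUnit_det X |>.mp hX.isUnit)
  have hXinvT : (X⁻¹)ᵀ = X⁻¹ := by rw [Matrix.transpose_nonsing_inv, hXT]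
  set A := c • X⁻¹ with hA_def
  set C := -(c • (Y * X⁻¹)) with hC_def
  set D := c⁻¹ • X with hD_def
  set S : Matrix (Fin n ⊕ Fin n) (Fin n ⊕ Fin n) ℝ := fromBlocks A 0 C D with hS_def
  refine ⟨S, ?_, ?_⟩
  · apply isSymplectic_blocks
    · simp [hA_def, hD_def, Matrix.transpose_smul, hXinvT, Matrix.smul_mul, Matrix.mul_smul,
        hXinv', smul_smul, mul_inv_cancel₀ hc.ne', inv_mul_cancel₀ hc.ne', one_smul]
    · simp [hA_def, hD_def, Matrix.transpose_smul, hXT, Matrix.smul_mul, Matrix.mul_smul,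
        hXinv, smul_smul, inv_mul_cancel₀ hc.ne', mul_inv_cancel₀ hc.ne', one_smul]
    · simp only [hA_def, hC_def, Matrix.transpose_neg, Matrix.transpose_smul,
        Matrix.transpose_mul, hXinvT, hYT, Matrix.mul_neg, Matrix.neg_mul,
        Matrix.mul_smul, Matrix.smul_mul, Matrix.mul_assoc, smul_neg]
  · rintro w ⟨z, hz, rfl⟩
    simp only [Set.mem_setOf_eq] at hz ⊢
    have hzz : 0 ≤ z ⬝ᵥ z := Finset.sum_nonneg fun i _ => mul_self_nonneg _
    have hzhb : z ⬝ᵥ z ≤ hb := by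
      nlinarith [Real.sq_sqrt hzz, Real.sq_sqrt hhb.le, Real.sqrt_nonneg (z ⬝ᵥ z),
        Real.sqrt_nonneg hb, hz]
    set R : Matrix (Fin n ⊕ Fin n) (Fin n ⊕ Fin n) ℝ := fromBlocks X 0 Y 1 with hR_def
    have hMFR : MF = t⁻¹ • (Rᵀ * R) := by
      rw [hMF, hR_def, fromBlocks_transpose, fromBlocks_multiply]
      simp [hXT, hYT]
    have hRS : R * S = fromBlocks (c • (1 : Matrix (Fin n) (Fin n) ℝ)) 0 0 D := by
      rw [hR_def, hS_def, fromBlocks_multiply]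
      simp [hA_def, hC_def, Matrix.mul_smul, hXinv]
    set u := z ∘ Sum.inl with hu_def
    set v := z ∘ Sum.inr with hv_def
    have huu : 0 ≤ u ⬝ᵥ u := Finset.sum_nonneg fun i _ => mul_self_nonneg _
    have hvv : 0 ≤ v ⬝ᵥ v := Finset.sum_nonneg fun i _ => mul_self_nonneg _
    have hsplit : u ⬝ᵥ u + v ⬝ᵥ v = z ⬝ᵥ z := by
      rw [← sumElim_dotProduct_sumElim, Sum.elim_comp_inl_inr]
    have hSMS : Sᵀ * MF * S = t⁻¹ • ((R * S)ᵀ * (R * S)) := by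
      rw [hMFR, Matrix.mul_smul, Matrix.smul_mul, Matrix.transpose_mul]
      congr 1
      rw [Matrix.mul_assoc, Matrix.mul_assoc, Matrix.mul_assoc]
    have hform : (R * S)ᵀ * (R * S) =
        fromBlocks ((c * c) • (1 : Matrix (Fin n) (Fin n) ℝ)) 0 0 ((c⁻¹ * c⁻¹) • (X * X)) := by
      rw [hRS, fromBlocks_transpose, fromBlocks_multiply, hD_def]
      congr 1 <;> simp [Matrix.transpose_smul, hXT, Matrix.smul_mul, Matrix.mul_smul, smul_smul]
    have hval : MF *ᵥ (S *ᵥ z) ⬝ᵥ (S *ᵥ z)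
        = t⁻¹ * ((c * c) * (u ⬝ᵥ u) + (c⁻¹ * c⁻¹) * ((X *ᵥ v) ⬝ᵥ (X *ᵥ v))) := by
      rw [quad_transport, hSMS, hform, Matrix.smul_mulVec, smul_dotProduct]
      rw [show z = Sum.elim u v from (Sum.elim_comp_inl_inr z).symm]
      rw [fromBlocks_mulVec]
      simp only [Sum.elim_comp_inl, Sum.elim_comp_inr, Matrix.zero_mulVec, add_zero, zero_add,
        Matrix.smul_mulVec, Matrix.one_mulVec]
      rw [sumElim_dotProduct_sumElim, smul_dotProduct, smul_dotProduct]
      rw [sq_mulVec_dot X hXT v]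
      simp [smul_eq_mul]
    rw [hval]
    have hkey : (X *ᵥ v) ⬝ᵥ (X *ᵥ v) ≤ t ^ 2 * (v ⬝ᵥ v) := mulVec_sq_le hX v
    have h1 : t⁻¹ * ((c * c) * (u ⬝ᵥ u) + (c⁻¹ * c⁻¹) * ((X *ᵥ v) ⬝ᵥ (X *ᵥ v)))
        ≤ u ⬝ᵥ u + v ⬝ᵥ v := by
      have hcc : c⁻¹ * c⁻¹ = t⁻¹ := by
        rw [← mul_inv, hc2]
      rw [hc2, hcc, mul_add, ← mul_assoc, inv_mul_cancel₀ ht.ne', one_mul]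
      have : t⁻¹ * (t⁻¹ * ((X *ᵥ v) ⬝ᵥ (X *ᵥ v))) ≤ v ⬝ᵥ v := by
        rw [← mul_assoc]
        calc t⁻¹ * t⁻¹ * ((X *ᵥ v) ⬝ᵥ (X *ᵥ v)) ≤ t⁻¹ * t⁻¹ * (t ^ 2 * (v ⬝ᵥ v)) := by
              apply mul_le_mul_of_nonneg_left hkey
              positivity
          _ = v ⬝ᵥ v := by field_simp
      linarith
    linarith [hsplit ▸ h1, hzhb]
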